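/- Let a, b, c, g be real numbers and let I ⊆ ℝ be an interval. Suppose v, y : I → ℝ are differentiable and satisfy on I the planar system v'(τ) = y(τ) and (c − v(τ))·y'(τ) − a·c·v(τ) + (1/3)·b·v(τ)³ − (1/2)·y(τ)² = −g. Then the function H(τ) = 6·a·c·v(τ)² − b·v(τ)⁴ + 6·y(τ)²·v(τ) − 12·g·v(τ) − 6·c·y(τ)² is constant on I. -/

import Mathlib

/-- For the planar profile system `v' = y`,
`(c − v)y' − a c v + (1/3) b v³ − (1/2) y² = −g` on an interval `I`, the quantity
`H = 6 a c v² − b v⁴ + 6 y² v − 12 g v − 6 c y²` is a first integral: it is constant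
on `I`. -/
theorem first_integral_of_profile_system (a b c g : ℝ) (I : Set ℝ) (hI : Convex ℝ I)
    (v y y' : ℝ → ℝ)
    (hv : ∀ τ ∈ I, HasDerivWithinAt v (y τ) I τ)
    (hy : ∀ τ ∈ I, HasDerivWithinAt y (y' τ) I τ)
    (heq : ∀ τ ∈ I,
      (c - v τ) * y' τ - a * c * v τ + (1 / 3) * b * (v τ) ^ 3
        - (1 / 2) * (y τ) ^ 2 = -g) :
    ∀ τ₁ ∈ I, ∀ τ₂ ∈ I,
      6 * a * c * (v τ₁) ^ 2 - b * (v τ₁) ^ 4 + 6 * (y τ₁) ^ 2 * v τ₁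
          - 12 * g * v τ₁ - 6 * c * (y τ₁) ^ 2
        = 6 * a * c * (v τ₂) ^ 2 - b * (v τ₂) ^ 4 + 6 * (y τ₂) ^ 2 * v τ₂
          - 12 * g * v τ₂ - 6 * c * (y τ₂) ^ 2 := by
  set H : ℝ → ℝ := fun t =>
    6 * a * c * (v t) ^ 2 - b * (v t) ^ 4 + 6 * (y t) ^ 2 * v t
      - 12 * g * v t - 6 * c * (y t) ^ 2 with hHdef
  have hH : ∀ τ ∈ I, HasDerivWithinAt H 0 I τ := by
    intro τ hτ
    have hD := (((((((hv τ hτ).pow 2).const_mul (6 * a * c)).sub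
        (((hv τ hτ).pow 4).const_mul b)).add
        ((((hy τ hτ).pow 2).const_mul 6).mul (hv τ hτ))).sub
        ((hv τ hτ).const_mul (12 * g))).sub
        (((hy τ hτ).pow 2).const_mul (6 * c)))
    refine hD.congr_deriv ?_
    simp only [Pi.pow_apply]
    linear_combination (-(12 * y τ)) * heq τ hτ
  intro τ₁ hτ₁ τ₂ hτ₂
  have key : ‖H τ₁ - H τ₂‖ ≤ 0 * ‖τ₁ - τ₂‖ := by
    refine Convex.norm_image_sub_le_of_norm_hasFDerivWithin_le
      (f' := fun _ => (0 : ℝ →L[ℝ] ℝ)) (fun x hx => ?_) (fun x hx => by simp) hI hτ₂ hτ₁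
    have h0 := (hH x hx).hasFDerivWithinAt
    refine h0.congr_fderiv ?_
    ext
    simp
  have : H τ₁ = H τ₂ := by
    have := key
    rw [zero_mul] at this
    have h := norm_le_zero_iff.mp this
    linarith [sub_eq_zero.mp h]
  simpa [hHdef] using this
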